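/- Let c, A, E ∈ ℝ with A ≠ 0, and let φ : ℝ → ℝ be three times continuously differentiable such that for all x: (φ − φ'')·((φ')² − φ² + c) = A, E − 4·A·φ(x) > 0, and φ² − (φ')² − c = −√(E − 4Aφ). Then μ := φ − φ'' satisfies the first-order equation (μ')² = (1/4)·μ² − (E/(2A²))·μ⁴ + (4/A)·μ⁵ + (E²/(4A⁴) − 4c/A²)·μ⁶ at every point. -/

import Mathlib

/-- on the homoclinic branch, the momentum profile `μ = φ − φ''`
satisfies the first-order equation
`(μ')² = μ²/4 − (E/(2A²))μ⁴ + (4/A)μ⁵ + (E²/(4A⁴) − 4c/A²)μ⁶`. -/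
theorem one_soliton_first_order (c A E : ℝ) (hA : A ≠ 0) (φ : ℝ → ℝ)
    (hφ : ContDiff ℝ 3 φ)
    (hODE : ∀ x, (φ x - deriv (deriv φ) x) * ((deriv φ x) ^ 2 - (φ x) ^ 2 + c) = A)
    (hpos : ∀ x, 0 < E - 4 * A * φ x)
    (hbranch : ∀ x, (φ x) ^ 2 - (deriv φ x) ^ 2 - c = -Real.sqrt (E - 4 * A * φ x)) :
    ∀ x,
      (deriv (fun y => φ y - deriv (deriv φ) y) x) ^ 2
        = (1 / 4) * (φ x - deriv (deriv φ) x) ^ 2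
          - (E / (2 * A ^ 2)) * (φ x - deriv (deriv φ) x) ^ 4
          + (4 / A) * (φ x - deriv (deriv φ) x) ^ 5
          + (E ^ 2 / (4 * A ^ 4) - 4 * c / A ^ 2) * (φ x - deriv (deriv φ) x) ^ 6 := by
  have hμ : ∀ y, φ y - deriv (deriv φ) y = A * (Real.sqrt (E - 4 * A * φ y))⁻¹ := by
    intro y
    have hs0 : 0 < Real.sqrt (E - 4 * A * φ y) := Real.sqrt_pos.mpr (hpos y)
    have h1 : (deriv φ y) ^ 2 - (φ y) ^ 2 + c = Real.sqrt (E - 4 * A * φ y) := by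
      have := hbranch y; linarith
    have h2 := hODE y
    rw [h1] at h2
    field_simp
    rw [show E - φ y * A * 4 = E - 4 * A * φ y by ring, eq_div_iff hs0.ne']
    linarith [h2]
  intro x
  have hs0 : 0 < Real.sqrt (E - 4 * A * φ x) := Real.sqrt_pos.mpr (hpos x)
  set s := Real.sqrt (E - 4 * A * φ x) with hs
  have hfun : (fun y => φ y - deriv (deriv φ) y)
      = fun y => A * (Real.sqrt (E - 4 * A * φ y))⁻¹ := funext hμ
  have hφx : HasDerivAt φ (deriv φ x) x :=
    (hφ.differentiable (by norm_num) x).hasDerivAt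
  have hgx : HasDerivAt (fun y => E - 4 * A * φ y) (-(4 * A * deriv φ x)) x :=
    (hφx.const_mul (4 * A)).const_sub E
  have hsx : HasDerivAt (fun y => Real.sqrt (E - 4 * A * φ y))
      (1 / (2 * s) * -(4 * A * deriv φ x)) x :=
    (Real.hasDerivAt_sqrt (hpos x).ne').comp x hgx
  have hix := (hsx.inv hs0.ne').const_mul A
  have hder : deriv (fun y => φ y - deriv (deriv φ) y) x
      = A * (-(1 / (2 * s) * -(4 * A * deriv φ x)) / s ^ 2) := by
    rw [hfun]; exact hix.deriv
  have hs2 : s ^ 2 = E - 4 * A * φ x := Real.sq_sqrt (hpos x).le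
  have hp2 : (deriv φ x) ^ 2 = (φ x) ^ 2 - c + s := by
    have := hbranch x; linarith
  rw [hder, hμ x, ← hs]
  have hsne : s ≠ 0 := hs0.ne'
  clear hfun hix hsx hgx hder hs hμ
  field_simp
  linear_combination (64 * A ^ 2) * hp2 + (4 * (4 * A * φ x + E - s ^ 2)) * hs2
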